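/- arXiv:1905.10149 — 6 statements merged into one kernel-verified Lean document; each statement's English description precedes it below -/
import Mathlib

section
/- Let V be a type and let (p_i, ℓ_i)_{i ∈ I} (I a finite index type) be a family of paths over V that is pairwise disentangled. Fix an index i and any ℓ' ≥ ℓ_i, and define the stay-extension p_i' : ℕ → V by p_i'(t) = p_i(t) for t ≤ ℓ_i and p_i'(t) = p_i(ℓ_i) for t > ℓ_i. Then the family obtained by replacing (p_i, ℓ_i) with (p_i', ℓ') is still pairwise disentangled. (Proposition 3.6 of the paper: if the collection of paths is disentangled, each agent can always extend its path to any later timestep, by staying at its last assigned node, while keeping the collection disentangled.) -/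
/-- Two paths `(p, lp)` and `(q, lq)` over `V` are disentangled:
whichever path is shorter, (i) no vertex conflict up to the shorter length,
(ii) no swap-type conflict up to the shorter length, and (iii) the last node of
the shorter path is avoided by the longer path afterwards. -/
def Disentangled {V : Type*} (p : ℕ → V) (lp : ℕ) (q : ℕ → V) (lq : ℕ) : Prop :=
  (lp ≤ lq →
    (∀ t ≤ lp, p t ≠ q t) ∧
    (∀ t, 0 < t → t ≤ lp → p t ≠ q (t - 1) ∧ p (t - 1) ≠ q t) ∧
    (∀ t, lp < t → t ≤ lq → p lp ≠ q t)) ∧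
  (lq ≤ lp →
    (∀ t ≤ lq, q t ≠ p t) ∧
    (∀ t, 0 < t → t ≤ lq → q t ≠ p (t - 1) ∧ q (t - 1) ≠ p t) ∧
    (∀ t, lq < t → t ≤ lp → q lq ≠ p t))

lemma Disentangled.symm {V : Type*} {p : ℕ → V} {lp : ℕ} {q : ℕ → V} {lq : ℕ}
    (h : Disentangled p lp q lq) : Disentangled q lq p lp := ⟨h.2, h.1⟩

lemma stay_extension_key {V : Type*} (p q : ℕ → V) (lp lq l' : ℕ) (hl : lp ≤ l')
    (p' : ℕ → V) (hp' : ∀ t, p' t = if t ≤ lp then p t else p lp)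
    (h : Disentangled p lp q lq) : Disentangled p' l' q lq := by
  constructor
  · intro hle
    obtain ⟨hi, hii, hiii⟩ := h.1 (hl.trans hle)
    refine ⟨?_, ?_, ?_⟩
    · intro t ht
      rw [hp' t]
      split
      · exact hi t ‹_›
      · exact hiii t (by omega) (by omega)
    · intro t ht0 htl
      rw [hp' t, hp' (t - 1)]
      constructor
      · split
        · exact (hii t ht0 ‹_›).1
        · rcases eq_or_lt_of_le (show lp ≤ t - 1 by omega) with heq | hlt
          · rw [← heq]; exact hi lp le_rfl
          · exact hiii (t - 1) hlt (by omega)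
      · split
        · by_cases htp : t ≤ lp
          · exact (hii t ht0 htp).2
          · have e : t - 1 = lp := by omega
            rw [e]; exact hiii t (by omega) (by omega)
        · exact hiii t (by omega) (by omega)
    · intro t ht1 ht2
      rw [hp' l']
      have : (if l' ≤ lp then p l' else p lp) = p lp := by
        split
        · congr 1; omega
        · rfl
      rw [this]
      exact hiii t (by omega) ht2
  · intro hle
    rcases le_total lq lp with hcase | hcase
    · obtain ⟨qi, qii, qiii⟩ := h.2 hcase
      refine ⟨?_, ?_, ?_⟩
      · intro t ht
        rw [hp' t, if_pos (by omega)]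
        exact qi t ht
      · intro t ht0 htl
        rw [hp' t, hp' (t - 1), if_pos (by omega), if_pos (by omega)]
        exact qii t ht0 htl
      · intro t ht1 ht2
        rw [hp' t]
        split
        · exact qiii t ht1 ‹_›
        · rcases eq_or_lt_of_le hcase with heq | hlt
          · rw [← heq]; exact qi lq le_rfl
          · exact qiii lp hlt le_rfl
    · obtain ⟨hi, hii, hiii⟩ := h.1 hcase
      refine ⟨?_, ?_, ?_⟩
      · intro t ht
        rw [hp' t]
        split
        · exact (hi t ‹_›).symm
        · exact (hiii t (by omega) ht).symm
      · intro t ht0 htl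
        rw [hp' t, hp' (t - 1)]
        constructor
        · split
          · by_cases htp : t ≤ lp
            · exact (hii t ht0 htp).2.symm
            · have e : t - 1 = lp := by omega
              rw [e]; exact (hiii t (by omega) htl).symm
          · exact (hiii t (by omega) htl).symm
        · split
          · exact (hii t ht0 ‹_›).1.symm
          · rcases eq_or_lt_of_le (show lp ≤ t - 1 by omega) with heq | hlt
            · rw [← heq]; exact (hi lp le_rfl).symm
            · exact (hiii (t - 1) hlt (by omega)).symm
      · intro t ht1 ht2
        rw [hp' t, if_neg (by omega)]
        rcases eq_or_lt_of_le hcase with heq | hlt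
        · rw [← heq]; exact (hi lp le_rfl).symm
        · exact (hiii lq hlt le_rfl).symm

/-- Proposition 3.6: in a disentangled family of paths, replacing the path of one
agent `i` by its stay-extension up to any later timestep `l'` keeps the family
disentangled. -/
theorem stay_extension_keeps_disentangled
    {V I : Type*} [Fintype I] [DecidableEq I]
    (p : I → ℕ → V) (l : I → ℕ)
    (hdis : ∀ i j, i ≠ j → Disentangled (p i) (l i) (p j) (l j))
    (i : I) (l' : ℕ) (hl' : l i ≤ l')
    (p' : ℕ → V)
    (hp' : ∀ t, p' t = if t ≤ l i then p i t else p i (l i)) :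
    ∀ a b, a ≠ b →
      Disentangled (Function.update p i p' a) (Function.update l i l' a)
        (Function.update p i p' b) (Function.update l i l' b) := by
  intro a b hab
  by_cases ha : a = i
  · have hb : b ≠ i := fun hbi => hab (ha.trans hbi.symm)
    rw [ha, Function.update_self, Function.update_self,
        Function.update_of_ne hb, Function.update_of_ne hb]
    exact stay_extension_key _ _ _ _ _ hl' _ hp' (hdis i b fun hib => hb hib.symm)
  · by_cases hb : b = i
    · rw [hb, Function.update_self, Function.update_self,
          Function.update_of_ne ha, Function.update_of_ne ha]
      exact (stay_extension_key _ _ _ _ _ hl' _ hp' (hdis i a fun hia => ha hia.symm)).symm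
    · rw [Function.update_of_ne ha, Function.update_of_ne ha,
          Function.update_of_ne hb, Function.update_of_ne hb]
      exact hdis a b hab
end

section
/- Let (p, ℓ) and (q, ℓ) be disentangled paths over a type V of equal length ℓ, and let u, w ∈ V satisfy u ≠ w, u ≠ q(ℓ), and w ≠ p(ℓ). Then the paths p' and q' of length ℓ + 1 obtained by setting p'(ℓ+1) = u and q'(ℓ+1) = w (and agreeing with p, q respectively up to time ℓ) are disentangled from each other. (Intermediate claim in the proof of Lemma 4.2, corresponding to the case of equal path lengths, i.e., a single PIBT step: two agents may simultaneously append distinct next nodes, neither equal to the other's current node, while preserving the disentangled condition.) -/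
lemma aux_half {V : Type*} (p q : ℕ → V) (l : ℕ)
    (h : (∀ t ≤ l, p t ≠ q t) ∧
      (∀ t, 0 < t → t ≤ l → p t ≠ q (t - 1) ∧ p (t - 1) ≠ q t))
    (u w : V) (huw : u ≠ w) (hu : u ≠ q l) (hw : w ≠ p l)
    (p' q' : ℕ → V)
    (hp'agree : ∀ t ≤ l, p' t = p t) (hp'last : p' (l + 1) = u)
    (hq'agree : ∀ t ≤ l, q' t = q t) (hq'last : q' (l + 1) = w) :
    (∀ t ≤ l + 1, p' t ≠ q' t) ∧
    (∀ t, 0 < t → t ≤ l + 1 → p' t ≠ q' (t - 1) ∧ p' (t - 1) ≠ q' t) ∧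
    (∀ t, l + 1 < t → t ≤ l + 1 → p' (l + 1) ≠ q' t) := by
  refine ⟨?_, ?_, fun t h1 h2 => absurd (h1.trans_le h2) (lt_irrefl _)⟩
  · intro t ht
    rcases Nat.lt_or_ge t (l + 1) with h' | h'
    · have ht' : t ≤ l := Nat.lt_succ_iff.mp h'
      rw [hp'agree t ht', hq'agree t ht']
      exact h.1 t ht'
    · have : t = l + 1 := le_antisymm ht h'
      subst this
      rw [hp'last, hq'last]; exact huw
  · intro t ht0 ht
    rcases Nat.lt_or_ge t (l + 1) with h' | h'
    · have ht' : t ≤ l := Nat.lt_succ_iff.mp h'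
      have ht1 : t - 1 ≤ l := le_trans (Nat.sub_le _ _) ht'
      rw [hp'agree t ht', hq'agree t ht', hp'agree _ ht1, hq'agree _ ht1]
      exact h.2 t ht0 ht'
    · have : t = l + 1 := le_antisymm ht h'
      subst this
      simp only [Nat.add_sub_cancel]
      rw [hp'last, hq'last, hp'agree l le_rfl, hq'agree l le_rfl]
      exact ⟨hu, hw.symm⟩

/-- Two disentangled paths of equal length may simultaneously append distinct
next nodes, neither equal to the other's current last node, while preserving
the disentangled condition (a single PIBT step). -/
theorem append_equal_lengths_keeps_disentangled
    {V : Type*} (p q : ℕ → V) (l : ℕ)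
    (hdis : Disentangled p l q l)
    (u w : V) (huw : u ≠ w) (hu : u ≠ q l) (hw : w ≠ p l)
    (p' q' : ℕ → V)
    (hp'agree : ∀ t ≤ l, p' t = p t) (hp'last : p' (l + 1) = u)
    (hq'agree : ∀ t ≤ l, q' t = q t) (hq'last : q' (l + 1) = w) :
    Disentangled p' (l + 1) q' (l + 1) := by
  obtain ⟨h1, h2⟩ := hdis
  have h1' := h1 le_rfl
  have h2' := h2 le_rfl
  constructor
  · intro _
    exact aux_half p q l ⟨h1'.1, h1'.2.1⟩ u w huw hu hw p' q' hp'agree hp'last hq'agree hq'last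
  · intro _
    exact aux_half q p l ⟨h2'.1, h2'.2.1⟩ w u huw.symm hw hu q' p' hq'agree hq'last hp'agree hp'last
end

section
/- Let (p_i, ℓ_i)_{i ∈ I} be a finite family of paths over a type V that is pairwise disentangled, and let L = max_{i ∈ I} ℓ_i. Define for each i the stay-extended path p_i'(t) = p_i(min(t, ℓ_i)), of length L. Then the family (p_i', L)_{i ∈ I} is pairwise disentangled; consequently, for every t ≤ L the map i ↦ p_i'(t) is injective and for 0 < t ≤ L and distinct i, j one has p_i'(t) ≠ p_j'(t−1). (Claim of the paper: if the collection of paths is disentangled, there exists a combination of extensions of the paths such that the agents never collide — namely, each agent stays at its last assigned node.) -/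
/-- Stay-extending every path of a disentangled family to the maximum length `L`
yields a disentangled family; consequently no vertex conflicts nor swap
conflicts occur up to timestep `L`. -/
theorem stay_extended_family_disentangled
    {V I : Type*} [Fintype I] [Nonempty I]
    (p : I → ℕ → V) (l : I → ℕ)
    (hdis : ∀ i j, i ≠ j → Disentangled (p i) (l i) (p j) (l j))
    (L : ℕ) (hL : L = Finset.univ.sup' Finset.univ_nonempty l) :
    (∀ i j, i ≠ j →
      Disentangled (fun t => p i (min t (l i))) L (fun t => p j (min t (l j))) L) ∧
    (∀ t ≤ L, Function.Injective (fun i => p i (min t (l i)))) ∧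
    (∀ t, 0 < t → t ≤ L → ∀ i j, i ≠ j →
      p i (min t (l i)) ≠ p j (min (t - 1) (l j))) := by
  -- Key: for any two times within 1 of each other, the stay-extended paths differ.
  have key : ∀ {p q : ℕ → V} {lp lq : ℕ}, lp ≤ lq →
      (∀ t ≤ lp, p t ≠ q t) →
      (∀ t, 0 < t → t ≤ lp → p t ≠ q (t - 1) ∧ p (t - 1) ≠ q t) →
      (∀ t, lp < t → t ≤ lq → p lp ≠ q t) →
      ∀ s t : ℕ, s ≤ t + 1 → t ≤ s + 1 → p (min s lp) ≠ q (min t lq) := by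
    intro p q lp lq hl h1 h2 h3 s t hst hts
    rcases le_or_gt s lp with hs | hs
    · rw [min_eq_left hs]
      rcases le_or_gt t lq with ht | ht
      · rw [min_eq_left ht]
        rcases Nat.lt_trichotomy s t with h | h | h
        · have hteq : t = s + 1 := by omega
          subst hteq
          rcases Nat.lt_or_ge s lp with h' | h'
          · have := (h2 (s + 1) (by omega) (by omega)).2
            simpa using this
          · have hslp : s = lp := by omega
            rw [hslp]
            exact h3 (lp + 1) (by omega) (by omega)
        · subst h; exact h1 s hs
        · have hseq : s = t + 1 := by omega
          subst hseq
          have := (h2 (t + 1) (by omega) hs).1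
          simpa using this
      · rw [min_eq_right ht.le]
        have h4 : s = lp := by omega
        have h5 : lq = lp := by omega
        rw [h4, h5]
        exact h1 lp le_rfl
    · rw [min_eq_right hs.le]
      rcases le_or_gt t lq with ht | ht
      · rw [min_eq_left ht]
        rcases Nat.lt_or_ge lp t with h' | h'
        · exact h3 t h' ht
        · have : t = lp := by omega
          rw [this]
          exact h1 lp le_rfl
      · rw [min_eq_right ht.le]
        rcases lt_or_eq_of_le hl with h' | h'
        · exact h3 lq h' le_rfl
        · rw [← h']
          exact h1 lp le_rfl
  have pairNe : ∀ i j, i ≠ j → ∀ s t : ℕ, s ≤ t + 1 → t ≤ s + 1 →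
      p i (min s (l i)) ≠ p j (min t (l j)) := by
    intro i j hij s t hst hts
    rcases le_total (l i) (l j) with hle | hle
    · obtain ⟨h1, h2, h3⟩ := (hdis i j hij).1 hle
      exact key hle h1 h2 h3 s t hst hts
    · obtain ⟨h1, h2, h3⟩ := (hdis i j hij).2 hle
      exact (key hle h1 h2 h3 t s hts hst).symm
  refine ⟨?_, ?_, ?_⟩
  · intro i j hij
    constructor
    · intro _
      refine ⟨fun t _ => pairNe i j hij t t (by omega) (by omega), ?_, ?_⟩
      · intro t ht _
        exact ⟨pairNe i j hij t (t - 1) (by omega) (by omega),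
               pairNe i j hij (t - 1) t (by omega) (by omega)⟩
      · intro t h h'
        exact absurd h' (by omega)
    · intro _
      refine ⟨fun t _ => pairNe j i hij.symm t t (by omega) (by omega), ?_, ?_⟩
      · intro t ht _
        exact ⟨pairNe j i hij.symm t (t - 1) (by omega) (by omega),
               pairNe j i hij.symm (t - 1) t (by omega) (by omega)⟩
      · intro t h h'
        exact absurd h' (by omega)
  · intro t _ i j h
    by_contra hne
    exact pairNe i j hne t t (by omega) (by omega) h
  · intro t ht _ i j hij
    exact pairNe i j hij t (t - 1) (by omega) (by omega)
end

section
/- Let G be a simple graph on a vertex type V, let A be a finite type of agents, let f : A → V be an injective configuration, and let c : G.Walk u u be a cycle (in the sense of SimpleGraph.Walk.IsCycle). Define f' : A → V by: f'(a) = c.getVert(k+1) whenever f(a) = c.getVert(k) for some 0 ≤ k < c.length, and f'(a) = f(a) otherwise (this is well-defined since the vertices c.getVert(0), …, c.getVert(c.length − 1) of a cycle are pairwise distinct). Then f' is a valid one-step transition from f: f' is injective, every agent either stays or moves along an edge of G, and no two distinct agents swap positions. (Rotation step underlying Lemma 3.3 of the paper: rotating all agents occupying vertices of a simple cycle of length ≥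 3 one position along the cycle is a collision-free move.) -/
lemma getVert_eq_support_getElem {V : Type*} {G : SimpleGraph V} {u v : V}
    (p : G.Walk u v) (n : ℕ) (h : n ≤ p.length) :
    p.getVert n = p.support[n]'(by rw [SimpleGraph.Walk.length_support]; omega) := by
  induction p generalizing n with
  | nil => simp only [SimpleGraph.Walk.length_nil, Nat.le_zero] at h; subst h; simp
  | cons h' q ih =>
    cases n with
    | zero => simp
    | succ m =>
      simp only [SimpleGraph.Walk.getVert_cons_succ, SimpleGraph.Walk.support_cons]
      rw [ih m (by simpa using h)]
      simp

lemma cycle_getVert_inj {V : Type*} {G : SimpleGraph V} {u : V}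
    {c : G.Walk u u} (hc : c.IsCycle) {k l : ℕ}
    (hk1 : 1 ≤ k) (hk : k ≤ c.length) (hl1 : 1 ≤ l) (hl : l ≤ c.length)
    (h : c.getVert k = c.getVert l) : k = l := by
  have hnd := hc.support_nodup
  have hlen : c.support.tail.length = c.length := by
    simp [SimpleGraph.Walk.length_support]
  rw [getVert_eq_support_getElem c k hk, getVert_eq_support_getElem c l hl] at h
  obtain ⟨k', rfl⟩ : ∃ k', k = k' + 1 := ⟨k - 1, by omega⟩
  obtain ⟨l', rfl⟩ : ∃ l', l = l' + 1 := ⟨l - 1, by omega⟩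
  have hk' : c.support[k' + 1]'(by rw [SimpleGraph.Walk.length_support]; omega)
      = c.support.tail[k']'(by omega) := (List.getElem_tail ..).symm
  have hl' : c.support[l' + 1]'(by rw [SimpleGraph.Walk.length_support]; omega)
      = c.support.tail[l']'(by omega) := (List.getElem_tail ..).symm
  rw [hk', hl'] at h
  have := hnd.getElem_inj_iff.mp h
  omega

/-- A valid one-step transition between configurations of agents on a graph:
no vertex conflict, every agent stays or moves along an edge, and no swap
conflict. -/
def ValidStep {V A : Type*} (G : SimpleGraph V) (f f' : A → V) : Prop :=
  Function.Injective f' ∧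
  (∀ a, f' a = f a ∨ G.Adj (f a) (f' a)) ∧
  (∀ a b, a ≠ b → ¬(f' a = f b ∧ f' b = f a))

/-- Rotating all agents occupying vertices of a simple cycle one position along
the cycle is a collision-free (valid) one-step move. -/
theorem cycle_rotation_validStep
    {V A : Type*} [Fintype A] (G : SimpleGraph V) (u : V)
    (c : G.Walk u u) (hc : c.IsCycle)
    (f f' : A → V) (hf : Function.Injective f)
    (hf' : ∀ a : A,
      (∀ k, k < c.length → f a = c.getVert k → f' a = c.getVert (k + 1)) ∧
      ((∀ k, k < c.length → f a ≠ c.getVert k) → f' a = f a)) :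
    ValidStep G f f' := by
  have h3 := hc.three_le_length
  have h0 : c.getVert c.length = c.getVert 0 := by
    rw [SimpleGraph.Walk.getVert_length, SimpleGraph.Walk.getVert_zero]
  have key : ∀ a, (∃ k, k < c.length ∧ f a = c.getVert k ∧ f' a = c.getVert (k + 1)) ∨
      ((∀ k, k < c.length → f a ≠ c.getVert k) ∧ f' a = f a) := by
    intro a
    by_cases h : ∃ k, k < c.length ∧ f a = c.getVert k
    · obtain ⟨k, hk, he⟩ := h
      exact Or.inl ⟨k, hk, he, (hf' a).1 k hk he⟩
    · push_neg at h
      exact Or.inr ⟨h, (hf' a).2 h⟩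
  -- mixed case helper: a moves, b stays is impossible when f' a = f b or f' a = f' b = f b
  have mixed : ∀ a b k, k < c.length → f' a = c.getVert (k + 1) →
      (∀ k', k' < c.length → f b ≠ c.getVert k') → f' a ≠ f b := by
    intro a b k hk ha hb hab
    rcases Nat.lt_or_ge (k + 1) c.length with h1 | h1
    · exact hb (k + 1) h1 (by rw [← hab, ha])
    · have : k + 1 = c.length := by omega
      exact hb 0 (by omega) (by rw [← hab, ha, this, h0])
  -- congruence helper: if getVert (k+1) = getVert l with k, l < length then
  -- l = k+1 or (l = 0 and k+1 = length)
  have cong : ∀ k l, k < c.length → l < c.length →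
      c.getVert (k + 1) = c.getVert l → l = k + 1 ∨ (l = 0 ∧ k + 1 = c.length) := by
    intro k l hk hl h
    rcases Nat.eq_zero_or_pos l with rfl | hl1
    · right
      refine ⟨rfl, ?_⟩
      rw [← h0] at h
      exact cycle_getVert_inj hc (by omega) (by omega) (by omega) le_rfl h
    · left
      exact (cycle_getVert_inj hc (by omega) (by omega) hl1 (by omega) h).symm
  refine ⟨?_, ?_, ?_⟩
  · -- injectivity
    intro a b hab
    by_contra hne
    rcases key a with ⟨k, hk, hfa, hfa'⟩ | ⟨hsa, hsa'⟩ <;>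
      rcases key b with ⟨l, hl, hfb, hfb'⟩ | ⟨hsb, hsb'⟩
    · -- both move
      rw [hfa', hfb'] at hab
      have : k + 1 = l + 1 :=
        cycle_getVert_inj hc (by omega) (by omega) (by omega) (by omega) hab
      exact hne (hf (by rw [hfa, hfb]; congr 1; omega))
    · exact mixed a b k hk hfa' hsb (by rw [hab, hsb'])
    · exact mixed b a l hl hfb' hsa (by rw [← hab, hsa'])
    · exact hne (hf (by rw [← hsa', ← hsb', hab]))
  · -- adjacency
    intro a
    rcases key a with ⟨k, hk, hfa, hfa'⟩ | ⟨_, hsa'⟩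
    · right
      rw [hfa, hfa']
      exact c.adj_getVert_succ hk
    · left; exact hsa'
  · -- no swap
    intro a b hne ⟨h1, h2⟩
    rcases key a with ⟨k, hk, hfa, hfa'⟩ | ⟨hsa, hsa'⟩ <;>
      rcases key b with ⟨l, hl, hfb, hfb'⟩ | ⟨hsb, hsb'⟩
    · -- both move
      rw [hfa', hfb] at h1
      rw [hfb', hfa] at h2
      have e1 := cong k l hk hl h1
      have e2 := cong l k hl hk h2
      omega
    · exact hne (hf (by rw [← h2, hsb']))
    · exact hne (hf (by rw [← hsa']; exact h1))
    · exact hne (hf (by rw [← hsa']; exact h1))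
end

section
/- Let G be a simple graph on a finite vertex type V satisfying the cycle condition, let A be a finite type of agents, let f : A → V be an injective configuration, let a₀ ∈ A be a distinguished (highest-priority) agent, and let v* be any vertex adjacent to f(a₀). Then there exists a configuration f' that is a valid one-step transition from f with f'(a₀) = v*. (Existential content of Lemma 3.3 of the paper: if there is a simple cycle of length ≥ 3 through the edge between the highest-priority agent's node and an arbitrary neighbor v*, then that agent can move to v* in the next timestep by a collision-free joint move of all agents.) -/
/-- `G` satisfies the cycle condition if for every pair of adjacent vertices
`u, v` there is a cycle from `u` to `u` whose second vertex is `v`. -/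
def CycleCond {V : Type*} (G : SimpleGraph V) : Prop :=
  ∀ u v : V, G.Adj u v → ∃ c : G.Walk u u, c.IsCycle ∧ c.getVert 1 = v

lemma walk_support_getElem {V : Type*} {G : SimpleGraph V} :
    ∀ {u v : V} (p : G.Walk u v) (i : ℕ) (h : i < p.support.length),
      p.support[i] = p.getVert i := by
  intro u v p
  induction p with
  | nil => intro i h; simp at h; subst h; simp
  | cons hadj q ih =>
    intro i h
    cases i with
    | zero => simp
    | succ j =>
      simp only [SimpleGraph.Walk.support_cons, List.getElem_cons_succ,
        SimpleGraph.Walk.getVert_cons_succ]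
      exact ih j (by simpa [SimpleGraph.Walk.support_cons] using h)

lemma getElem_idx_congr {α : Type*} (L : List α) {j k : ℕ} (h : j = k)
    (hj : j < L.length) : L[j] = L[k]'(h ▸ hj) := by subst h; rfl

/-- Lemma 3.3 (existential content): on a graph satisfying the cycle condition,
the highest-priority agent can move to an arbitrary neighbor of its current
node via a valid joint one-step move of all agents. -/
theorem highest_priority_agent_can_move
    {V A : Type*} [Fintype V] [Fintype A] (G : SimpleGraph V)
    (hG : CycleCond G)
    (f : A → V) (hf : Function.Injective f)
    (a0 : A) (vstar : V) (hadj : G.Adj (f a0) vstar) :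
    ∃ f' : A → V, ValidStep G f f' ∧ f' a0 = vstar := by
  classical
  obtain ⟨c, hc, hc1⟩ := hG (f a0) vstar hadj
  have h3 : 3 ≤ c.length := hc.three_le_length
  set n := c.length with hn
  set L := c.support.dropLast with hLdef
  have hslen : c.support.length = n + 1 := c.length_support
  have hlen : L.length = n := by
    simp [hLdef, List.length_dropLast, hslen]
  have hget : ∀ i (h : i < n), L[i]'(by omega) = c.getVert i := by
    intro i h
    have h1 : L[i]'(by omega) = c.support[i]'(by omega) :=
      List.getElem_dropLast (by simp only [← hLdef, hlen]; omega)
    rw [h1]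
    exact walk_support_getElem c i (by omega)
  -- Nodup of L
  have htail : c.support.tail.Nodup := hc.support_nodup
  have htne : c.support.tail ≠ [] := by
    intro h
    have := congrArg List.length h
    simp [List.length_tail, hslen] at this
    omega
  have hlast : c.support.tail.getLast htne = f a0 := by
    rw [List.getLast_tail]
    exact c.getLast_support
  have hnotmem : f a0 ∉ c.support.tail.dropLast := by
    have ht := htail
    rw [← List.dropLast_append_getLast htne] at ht
    have := (List.nodup_append'.mp ht).2.2
    intro hmem
    exact this hmem (by simp [hlast])
  have hnd : L.Nodup := by
    rw [hLdef, c.support_eq_cons, List.dropLast_cons_of_ne_nil htne]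
    exact List.nodup_cons.mpr ⟨hnotmem, htail.sublist (List.dropLast_sublist _)⟩
  set σ := L.formPerm with hσ
  have hσget : ∀ i (h : i < n), σ (L[i]'(by omega)) = L[(i+1) % n]'(by
      have := Nat.mod_lt (i+1) (show 0 < n by omega); omega) := by
    intro i h
    rw [hσ]
    have := List.formPerm_apply_getElem L hnd i (by omega)
    simpa [hlen] using this
  -- membership / not membership dichotomy
  have hstep : ∀ x, σ x = x ∨ G.Adj x (σ x) := by
    intro x
    by_cases hx : x ∈ L
    · right
      obtain ⟨i, hi, rfl⟩ := List.getElem_of_mem hx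
      have hi' : i < n := by omega
      rw [hσget i hi']
      rw [hget i hi', hget _ (Nat.mod_lt _ (by omega))]
      by_cases hin : i + 1 < n
      · rw [Nat.mod_eq_of_lt hin]
        exact c.adj_getVert_succ (by omega)
      · have hieq : i + 1 = n := by omega
        have hm0 : (i + 1) % n = 0 := by rw [hieq]; simp
        rw [hm0, c.getVert_zero]
        have hA := c.adj_getVert_succ (show i < c.length by omega)
        rw [hieq] at hA
        rwa [show c.getVert n = f a0 from c.getVert_length] at hA
    · left; exact List.formPerm_apply_of_notMem hx
  refine ⟨fun a => σ (f a), ⟨σ.injective.comp hf, ?_, ?_⟩, ?_⟩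
  · intro a
    rcases hstep (f a) with h | h
    · left; exact h
    · right; exact h
  · -- no swap
    intro a b hab hsw
    obtain ⟨h1, h2⟩ := hsw
    simp only at h1 h2
    have hxy : f a ≠ f b := fun h => hab (hf h)
    have hxL : f a ∈ L := by
      by_contra hx
      exact hxy (by rw [← h1, List.formPerm_apply_of_notMem hx])
    obtain ⟨i, hi, hxi⟩ := List.getElem_of_mem hxL
    have hi' : i < n := by omega
    have hy : f b = L[(i+1) % n]'(by have := Nat.mod_lt (i+1) (show 0 < n by omega); omega) := by
      rw [← h1, ← hxi, hσget i hi']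
    have hmod : (i + 1) % n < n := Nat.mod_lt _ (by omega)
    have h2' : σ (L[(i+1) % n]'(by omega)) = L[((i+1) % n + 1) % n]'(by
        have := Nat.mod_lt ((i+1) % n + 1) (show 0 < n by omega); omega) :=
      hσget _ hmod
    have hxa : f a = L[((i+1) % n + 1) % n]'(by
        have := Nat.mod_lt ((i+1) % n + 1) (show 0 < n by omega); omega) := by
      rw [← h2, hy, h2']
    have heq : L[i]'(by omega) = L[((i+1) % n + 1) % n]'(by
        have := Nat.mod_lt ((i+1) % n + 1) (show 0 < n by omega); omega) := by
      rw [hxi]; exact hxa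
    have hidx : i = ((i+1) % n + 1) % n := by
      exact (List.Nodup.getElem_inj_iff hnd).mp heq
    have hsimp : ((i+1) % n + 1) % n = (i + 2) % n := by
      conv_rhs => rw [show i + 2 = (i+1) + 1 from rfl]
      rw [Nat.mod_add_mod]
    rw [hsimp] at hidx
    -- derive contradiction: i < n, n ≥ 3, (i+2) % n = i
    by_cases hlt : i + 2 < n
    · rw [Nat.mod_eq_of_lt hlt] at hidx; omega
    · have h2n : i + 2 - n < n := by omega
      have : (i + 2) % n = i + 2 - n := by
        rw [Nat.mod_eq_sub_mod (by omega), Nat.mod_eq_of_lt h2n]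
      omega
  · -- f' a0 = vstar
    show σ (f a0) = vstar
    have h0 : f a0 = L[0]'(by omega) := by rw [hget 0 (by omega), c.getVert_zero]
    rw [h0, hσget 0 (by omega)]
    have hidx : L[(0 + 1) % n]'(by have := Nat.mod_lt (0+1) (show 0 < n by omega); omega)
        = L[1]'(by omega) := by
      apply getElem_idx_congr
      exact Nat.mod_eq_of_lt (by omega)
    rw [hidx, hget 1 (by omega), hc1]
end

section
/- Let G be a connected simple graph on a finite nonempty vertex type V satisfying the cycle condition, let A be a finite type of agents, let f₀ : A → V be an injective configuration, and let g : A → V assign a destination to each agent. Then there exist k ≤ diam(G) · |A| and configurations f₀, f₁, …, f_k such that each consecutive pair is a valid one-step transition and for every agent a there exists a timestep t ≤ k with f_t(a) = g(a). (Existential content of Theorem 3.5 of the paper: if G satisfies the cycle condition, PIBT lets all agents reach their own destinations within diam(G)·|A| timesteps after the destinations are given; note that the agents need not be at their goals simultaneously.) -/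
section Aux
variable {V : Type*} {G : SimpleGraph V}

lemma getVert_eq_support_getD {u v : V} (p : G.Walk u v) {i : ℕ} (h : i ≤ p.length) :
    p.getVert i = p.support.getD i u := by
  induction p generalizing i with
  | nil =>
    have : i = 0 := by simpa using h
    subst this
    simp
  | cons h' q ih =>
    cases i with
    | zero => simp
    | succ j =>
      have hj : j ≤ q.length := by simpa using h
      have hjl : j < q.support.length := by rw [SimpleGraph.Walk.length_support]; omega
      rw [SimpleGraph.Walk.getVert_cons_succ, ih hj, SimpleGraph.Walk.support_cons,
        List.getD_cons_succ, List.getD_eq_getElem _ _ hjl, List.getD_eq_getElem _ _ hjl]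

lemma cycle_getVert_inj_s11 {u : V} {p : G.Walk u u} (hp : p.IsCycle)
    {i j : ℕ} (hi : i < p.length) (hj : j < p.length)
    (hij : p.getVert i = p.getVert j) : i = j := by
  have hnd := hp.2
  have key : ∀ {i j : ℕ}, 1 ≤ i → i ≤ p.length → 1 ≤ j → j ≤ p.length →
      p.getVert i = p.getVert j → i = j := by
    intro i j h1 h2 h3 h4 h
    obtain ⟨m, rfl⟩ : ∃ m, i = m + 1 := ⟨i - 1, by omega⟩
    obtain ⟨l, rfl⟩ : ∃ l, j = l + 1 := ⟨j - 1, by omega⟩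
    have hsl : p.support.length = p.length + 1 := SimpleGraph.Walk.length_support p
    have hm : m < p.support.tail.length := by rw [List.length_tail]; omega
    have hl : l < p.support.tail.length := by rw [List.length_tail]; omega
    have hgt : p.support.tail.get ⟨m, hm⟩ = p.support.tail.get ⟨l, hl⟩ := by
      rw [List.get_tail, List.get_tail, List.get_eq_getElem, List.get_eq_getElem,
        ← List.getD_eq_getElem p.support u (by omega), ← List.getD_eq_getElem p.support u (by omega),
        ← getVert_eq_support_getD p h2, ← getVert_eq_support_getD p h4]
      exact h
    have := (List.Nodup.get_inj_iff hnd).mp hgt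
    simp only [Fin.mk.injEq] at this
    omega
  rcases Nat.eq_zero_or_pos i with rfl | hi1
  · rcases Nat.eq_zero_or_pos j with rfl | hj1
    · rfl
    · exfalso
      have h0 : p.getVert p.length = p.getVert j :=
        calc p.getVert p.length = u := p.getVert_length
        _ = p.getVert 0 := p.getVert_zero.symm
        _ = p.getVert j := hij
      have := key (by omega) le_rfl hj1 (by omega) h0
      omega
  · rcases Nat.eq_zero_or_pos j with rfl | hj1
    · exfalso
      have h0 : p.getVert i = p.getVert p.length :=
        calc p.getVert i = p.getVert 0 := hij
        _ = u := p.getVert_zero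
        _ = p.getVert p.length := p.getVert_length.symm
      have := key hi1 (by omega) (by omega) le_rfl h0
      omega
    · exact key hi1 (by omega) hj1 (by omega) hij

end Aux

section PIBT
variable {V A : Type*} {G : SimpleGraph V}

variable {V A : Type*} {G : SimpleGraph V}

lemma exists_validStep (hG : CycleCond G) (f : A → V) (hf : Function.Injective f)
    (a : A) {v : V} (hadj : G.Adj (f a) v) :
    ∃ f', ValidStep G f f' ∧ f' a = v := by
  classical
  obtain ⟨c, hc, hc1⟩ := hG (f a) v hadj
  set n := c.length with hn
  have hn3 : 3 ≤ n := hc.three_le_length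
  have hm : ∀ i, i < n → (i + 1) % n = i + 1 ∨ ((i + 1) % n = 0 ∧ i + 1 = n) := by
    intro i hi
    rcases Nat.lt_or_ge (i + 1) n with h | h
    · exact Or.inl (Nat.mod_eq_of_lt h)
    · have h' : i + 1 = n := by omega
      exact Or.inr ⟨by rw [h', Nat.mod_self], h'⟩
  have hwrap : ∀ i, i < n → c.getVert ((i + 1) % n) = c.getVert (i + 1) := by
    intro i hi
    rcases Nat.lt_or_ge (i + 1) n with h | h
    · rw [Nat.mod_eq_of_lt h]
    · have hin : i + 1 = n := by omega
      rw [hin, Nat.mod_self]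
      calc c.getVert 0 = f a := c.getVert_zero
      _ = c.getVert c.length := c.getVert_length.symm
      _ = c.getVert n := by rw [← hn]
  let σ : V → V := fun w => if h : ∃ i, i < n ∧ c.getVert i = w then
    c.getVert ((h.choose + 1) % n) else w
  have hσ : ∀ i, i < n → σ (c.getVert i) = c.getVert (i + 1) := by
    intro i hi
    have hex : ∃ j, j < n ∧ c.getVert j = c.getVert i := ⟨i, hi, rfl⟩
    have hch := hex.choose_spec
    have heq : hex.choose = i := cycle_getVert_inj_s11 hc hch.1 hi hch.2
    simp only [σ, dif_pos hex, heq]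
    exact hwrap i hi
  have hσ_id : ∀ w, (¬ ∃ i, i < n ∧ c.getVert i = w) → σ w = w := by
    intro w hw
    simp only [σ, dif_neg hw]
  have hmemS : ∀ i, i < n → ∃ j, j < n ∧ c.getVert j = c.getVert (i + 1) := by
    intro i hi
    exact ⟨(i + 1) % n, Nat.mod_lt _ (by omega), hwrap i hi⟩
  -- injectivity
  have hσinj : Function.Injective σ := by
    intro x y hxy
    by_cases hx : ∃ i, i < n ∧ c.getVert i = x
    · obtain ⟨i, hi, rfl⟩ := hx
      by_cases hy : ∃ j, j < n ∧ c.getVert j = y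
      · obtain ⟨j, hj, rfl⟩ := hy
        rw [hσ i hi, hσ j hj] at hxy
        rw [← hwrap i hi, ← hwrap j hj] at hxy
        have := cycle_getVert_inj_s11 hc (Nat.mod_lt _ (by omega : 0 < n))
          (Nat.mod_lt _ (by omega : 0 < n)) hxy
        rw [← hn] at this
        have hij : i = j := by
          rcases hm i hi with h1 | ⟨h1, h1'⟩ <;> rcases hm j hj with h2 | ⟨h2, h2'⟩ <;> omega
        rw [hij]
      · rw [hσ i hi, hσ_id y hy] at hxy
        exact absurd ⟨(i + 1) % n, Nat.mod_lt _ (by omega), by rw [hwrap i hi, hxy]⟩ hy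
    · by_cases hy : ∃ j, j < n ∧ c.getVert j = y
      · obtain ⟨j, hj, rfl⟩ := hy
        rw [hσ j hj, hσ_id x hx] at hxy
        exact absurd ⟨(j + 1) % n, Nat.mod_lt _ (by omega), by rw [hwrap j hj, ← hxy]⟩ hx
      · rwa [hσ_id x hx, hσ_id y hy] at hxy
  -- adjacency
  have hσadj : ∀ w, σ w = w ∨ G.Adj w (σ w) := by
    intro w
    by_cases hw : ∃ i, i < n ∧ c.getVert i = w
    · obtain ⟨i, hi, rfl⟩ := hw
      right
      rw [hσ i hi]
      exact c.adj_getVert_succ hi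
    · left; exact hσ_id w hw
  -- no 2-swap
  have hσswap : ∀ x y, x ≠ y → ¬(σ x = y ∧ σ y = x) := by
    rintro x y hne ⟨h1, h2⟩
    have hx : ∃ i, i < n ∧ c.getVert i = x := by
      by_contra hx
      exact hne (hσ_id x hx ▸ h1)
    obtain ⟨i, hi, rfl⟩ := hx
    have hy : ∃ j, j < n ∧ c.getVert j = y := ⟨(i + 1) % n, Nat.mod_lt _ (by omega),
      by rw [hwrap i hi, ← h1, hσ i hi]⟩
    obtain ⟨j, hj, rfl⟩ := hy
    rw [hσ i hi, ← hwrap i hi] at h1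
    rw [hσ j hj, ← hwrap j hj] at h2
    have e1 := cycle_getVert_inj_s11 hc (Nat.mod_lt _ (by omega : 0 < n)) hj h1
    have e2 := cycle_getVert_inj_s11 hc (Nat.mod_lt _ (by omega : 0 < n)) hi h2
    rw [← hn] at e1 e2
    rcases hm i hi with hw1 | ⟨hw1, hw1'⟩ <;> rcases hm j hj with hw2 | ⟨hw2, hw2'⟩ <;> omega
  refine ⟨σ ∘ f, ⟨hσinj.comp hf, fun b => ?_, fun b b' hne hcontra => ?_⟩, ?_⟩
  · rcases hσadj (f b) with h | h
    · left; exact h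
    · right; exact h
  · exact hσswap (f b) (f b') (fun h => hne (hf h)) ⟨hcontra.1, hcontra.2⟩
  · have h0 := hσ 0 (by omega)
    rw [c.getVert_zero] at h0
    simp only [Function.comp_apply, h0, hc1]

variable {V A : Type*} {G : SimpleGraph V}

lemma follow_walk (hG : CycleCond G) {x y : V} (p : G.Walk x y) :
    ∀ (f : A → V), Function.Injective f → ∀ (a : A), f a = x →
    ∃ F : ℕ → A → V, F 0 = f ∧ (∀ t, t < p.length → ValidStep G (F t) (F (t + 1))) ∧
      F p.length a = y ∧ Function.Injective (F p.length) := by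
  induction p with
  | nil =>
    intro f hf a ha
    exact ⟨fun _ => f, rfl, by simp, by simpa using ha, hf⟩
  | @cons x w y hadj q ih =>
    intro f hf a ha
    obtain ⟨f', hvs, hf'a⟩ := exists_validStep hG f hf a (show G.Adj (f a) w by rw [ha]; exact hadj)
    obtain ⟨F', hF'0, hF'v, hF'a, hF'inj⟩ := ih f' hvs.1 a hf'a
    refine ⟨fun t => match t with | 0 => f | t + 1 => F' t, rfl, ?_, ?_, ?_⟩
    · intro t ht
      match t with
      | 0 =>
        show ValidStep G f (F' 0)
        rw [hF'0]; exact hvs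
      | t + 1 =>
        exact hF'v t (by simpa using ht)
    · show F' (SimpleGraph.Walk.cons hadj q).length.pred a = y
      simpa using hF'a
    · show Function.Injective (F' (SimpleGraph.Walk.cons hadj q).length.pred)
      simpa using hF'inj

lemma main_aux (hconn : G.Connected) (hG : CycleCond G) (g : A → V) {D : ℕ}
    (hD : ∀ u v : V, G.dist u v ≤ D) :
    ∀ (l : List A) (f : A → V), Function.Injective f →
    ∃ k ≤ D * l.length, ∃ F : ℕ → A → V, F 0 = f ∧
      (∀ t, t < k → ValidStep G (F t) (F (t + 1))) ∧
      Function.Injective (F k) ∧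
      (∀ a ∈ l, ∃ t ≤ k, F t a = g a) := by
  intro l
  induction l with
  | nil =>
    intro f hf
    exact ⟨0, by simp, fun _ => f, rfl, by omega, hf, by simp⟩
  | cons a l ih =>
    intro f hf
    obtain ⟨p, hp⟩ := ((hconn.preconnected (f a) (g a))).exists_walk_length_eq_dist
    obtain ⟨F1, hF10, hF1v, hF1a, hF1inj⟩ := follow_walk hG p f hf a rfl
    obtain ⟨k2, hk2, F2, hF20, hF2v, hF2inj, hF2g⟩ := ih (F1 p.length) hF1inj
    set k1 := p.length with hk1
    have hmid : ∀ s, (if k1 + s ≤ k1 then F1 (k1 + s) else F2 (k1 + s - k1)) = F2 s := by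
      intro s
      by_cases hs : k1 + s ≤ k1
      · have hs0 : s = 0 := by omega
        subst hs0
        rw [if_pos hs, hF20, Nat.add_zero]
      · have e : k1 + s - k1 = s := by omega
        rw [if_neg hs, e]
    refine ⟨k1 + k2, ?_, fun t => if t ≤ k1 then F1 t else F2 (t - k1), ?_, ?_, ?_, ?_⟩
    · have hk1D : k1 ≤ D := le_trans (le_of_eq hp) (hD _ _)
      have : D * (a :: l).length = D + D * l.length := by
        rw [List.length_cons]; ring
      omega
    · simp [hF10]
    · intro t ht
      by_cases h1 : t + 1 ≤ k1
      · simp only [if_pos (by omega : t ≤ k1), if_pos h1]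
        exact hF1v t (by omega)
      · by_cases h0 : t ≤ k1
        · have hte : t = k1 := by omega
          simp only [if_pos h0, if_neg h1]
          have e : t + 1 - k1 = 1 := by omega
          rw [e, hte, ← hF20]
          exact hF2v 0 (by omega)
        · simp only [if_neg h0, if_neg h1]
          have e : t + 1 - k1 = (t - k1) + 1 := by omega
          rw [e]
          exact hF2v (t - k1) (by omega)
    · show Function.Injective (if k1 + k2 ≤ k1 then F1 (k1 + k2) else F2 (k1 + k2 - k1))
      rw [hmid k2]
      exact hF2inj
    · intro b hb
      rcases List.mem_cons.mp hb with rfl | hbl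
      · exact ⟨k1, by omega, by simp only [if_pos le_rfl]; exact hF1a⟩
      · obtain ⟨t2, ht2, hgoal⟩ := hF2g b hbl
        refine ⟨k1 + t2, by omega, ?_⟩
        show (if k1 + t2 ≤ k1 then F1 (k1 + t2) else F2 (k1 + t2 - k1)) b = g b
        rw [hmid t2]
        exact hgoal

end PIBT

/-- Theorem 3.5 (existential content): if `G` satisfies the cycle condition,
all agents can reach their own destinations within `diam(G) * |A|` timesteps
via valid one-step transitions (not necessarily simultaneously). -/
theorem all_agents_reach_goals
    {V A : Type*} [Fintype V] [Nonempty V] [Fintype A] (G : SimpleGraph V)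
    (hconn : G.Connected) (hG : CycleCond G)
    (f0 : A → V) (hf0 : Function.Injective f0)
    (g : A → V) :
    ∃ k ≤ G.diam * Fintype.card A, ∃ F : ℕ → (A → V), F 0 = f0 ∧
      (∀ t, t < k → ValidStep G (F t) (F (t + 1))) ∧
      (∀ a : A, ∃ t ≤ k, F t a = g a) := by
  classical
  have hetop : G.ediam ≠ ⊤ := by
    obtain ⟨u, v, huv⟩ := SimpleGraph.exists_edist_eq_ediam_of_finite (G := G)
    rw [← huv]
    exact (SimpleGraph.edist_ne_top_iff_reachable).mpr (hconn.preconnected u v)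
  have hD : ∀ u v : V, G.dist u v ≤ G.diam := fun u v => SimpleGraph.dist_le_diam hetop
  obtain ⟨k, hk, F, hF0, hFv, _, hFg⟩ :=
    main_aux hconn hG g hD (Finset.univ : Finset A).toList f0 hf0
  refine ⟨k, ?_, F, hF0, hFv, ?_⟩
  · simpa [Finset.length_toList] using hk
  · intro a
    exact hFg a (by simp [Finset.mem_toList])
end
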